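/- arXiv:2412.05196 — 2 statements merged into one kernel-verified Lean document; each statement's English description precedes it below -/
import Mathlib

section
/- Let ω_t > 0 for t ≥ 1 be input rerooting weights, set Ω_{≤t} = Σ_{k≤t} ω_k and Ω_{<t} = Σ_{k<t} ω_k, and define the rerooting weights w_t = ω_t/Ω_{≤t} (so w_1 = 1). Consider a √LTS run with these weights and suppose node n_T is visited at step T. Then for every subtask decomposition T_1 < T_2 < … < T_m of n_T: T ≤ (1 + ln(Ω_{<T}/ω_1)) · max_{1 ≤ i < m} (Ω_{≤T_i}/ω_{T_i}) · Λ(n_{T_{i+1}} | n_{T_i}). -/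
open scoped ENNReal NNReal Classical

/-- A rooted tree: a parent map with a root that every node reaches after finitely
many applications of the parent map. -/
structure ParentTree (N : Type*) where
  root : N
  par : N → N
  par_root : par root = root
  reaches_root : ∀ n : N, ∃ k : ℕ, par^[k] n = root

namespace ParentTree

variable {N : Type*}

/-- `t.anc n m` means `n` is an ancestor of `m` (possibly `n = m`). -/
def anc (t : ParentTree N) (n m : N) : Prop := ∃ k : ℕ, t.par^[k] m = n

/-- `t.sanc n m` means `n` is a strict ancestor of `m`. -/
def sanc (t : ParentTree N) (n m : N) : Prop := t.anc n m ∧ n ≠ m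

/-- The set of children of a node. -/
def children (t : ParentTree N) (n : N) : Set N := {m | m ≠ t.root ∧ t.par m = n}

/-- The depth of a node: the least `k` with `par^[k] n = root`. -/
noncomputable def depth (t : ParentTree N) (n : N) : ℕ := sInf {k : ℕ | t.par^[k] n = t.root}

/-- The distance from an ancestor `n` to `m`: the least `k` with `par^[k] m = n`. -/
noncomputable def dist (t : ParentTree N) (n m : N) : ℕ := sInf {k : ℕ | t.par^[k] m = n}

end ParentTree

/-- A policy: conditional probabilities `π(m | par m)` on nodes, summing to at most 1
over the children of any node. -/
structure Policy {N : Type*} (t : ParentTree N) where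
  cond : N → ℝ
  cond_nonneg : ∀ m : N, 0 ≤ cond m
  cond_le_one : ∀ m : N, cond m ≤ 1
  sum_le_one : ∀ (n : N) (s : Finset N), ↑s ⊆ t.children n → ∑ m ∈ s, cond m ≤ 1

namespace Policy

variable {N : Type*} {t : ParentTree N}

/-- The relative path probability `π(n | na)` as an extended nonnegative real:
the product of the conditional probabilities along the path from `na` (excluded) to `n`. -/
noncomputable def relProbE (P : Policy t) (na n : N) : ℝ≥0∞ :=
  ∏ j ∈ Finset.range (t.dist na n), ENNReal.ofReal (P.cond (t.par^[j] n))

/-- The rooted slenderness cost `Λ(n | na) = Σ_{na ⪯ n̄ ⪯ n} 1/π(n̄ | na)`, set to `∞`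
when `na` is not an ancestor of `n`. -/
noncomputable def rootSlend (P : Policy t) (na n : N) : ℝ≥0∞ :=
  if t.anc na n then
    ∑ k ∈ Finset.range (t.dist na n + 1), (P.relProbE na (t.par^[k] n))⁻¹
  else ⊤

end Policy

/-- The √LTS cost function `c^r` determined by a run (`visit`, `Q`) and rerooting weights
`w`: `c^r(root) = 1` and, for `n ≠ root`, `c^r(n)` is the infimum over all steps `s ≥ 1` at
which a node is visited with `visit s ≺ n` of `(Λ(n | visit s) − 1)/w s`
(with the convention `x/0 = ∞`). -/
noncomputable def runCost {N : Type*} (t : ParentTree N) (P : Policy t)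
    (visit : ℕ → N) (Q : ℕ → Set N) (w : ℕ → ℝ≥0) (n : N) : ℝ≥0∞ :=
  if n = t.root then 1
  else ⨅ s ∈ {s : ℕ | 1 ≤ s ∧ (Q s).Nonempty ∧ t.sanc (visit s) n},
    (P.rootSlend (visit s) n - 1) / (w s : ℝ≥0∞)

/-- A √LTS run: a best-first-search enumeration whose cost function is the `runCost`
defined from the run itself and the rerooting weights `w`. -/
def IsRootLTS {N : Type*} (t : ParentTree N) (P : Policy t)
    (visit : ℕ → N) (Q : ℕ → Set N) (w : ℕ → ℝ≥0) : Prop :=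
  Q 1 = {t.root} ∧
  (∀ s : ℕ, 1 ≤ s → (Q s).Nonempty →
      visit s ∈ Q s ∧
      (∀ n ∈ Q s, runCost t P visit Q w (visit s) ≤ runCost t P visit Q w n) ∧
      Q (s + 1) = (Q s \ {visit s}) ∪ t.children (visit s)) ∧
  (∀ s : ℕ, 1 ≤ s → Q s = ∅ → Q (s + 1) = ∅) ∧
  (∀ s s' : ℕ, 1 ≤ s → 1 ≤ s' → (Q s).Nonempty → (Q s').Nonempty →
      visit s = visit s' → s = s')

namespace ParentTree

variable {N : Type*} (t : ParentTree N)

lemma anc_refl (n : N) : t.anc n n := ⟨0, rfl⟩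

lemma anc_trans {a b c : N} (h1 : t.anc a b) (h2 : t.anc b c) : t.anc a c := by
  obtain ⟨k, hk⟩ := h1; obtain ⟨l, hl⟩ := h2
  exact ⟨k + l, by rw [Function.iterate_add_apply, hl, hk]⟩

lemma iterate_par_root (k : ℕ) : t.par^[k] t.root = t.root := by
  induction k with
  | zero => rfl
  | succ k ih => rw [Function.iterate_succ_apply', ih, t.par_root]

lemma anc_root (n : N) : t.anc t.root n := t.reaches_root n

lemma eq_root_of_anc_root {a : N} (h : t.anc a t.root) : a = t.root := by
  obtain ⟨k, hk⟩ := h; rw [iterate_par_root] at hk; exact hk.symm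

lemma eq_root_of_par_eq_self {a : N} (h : t.par a = a) : a = t.root := by
  obtain ⟨k, hk⟩ := t.reaches_root a
  have hiter : ∀ j, t.par^[j] a = a := by
    intro j
    induction j with
    | zero => rfl
    | succ j ih => rw [Function.iterate_succ_apply', ih, h]
  rw [hiter k] at hk; exact hk

lemma iterate_cycle {a : N} {c : ℕ} (h : t.par^[c] a = a) (j : ℕ) : t.par^[j * c] a = a := by
  induction j with
  | zero => simp
  | succ j ih => rw [Nat.succ_mul, Function.iterate_add_apply, h, ih]

lemma eq_root_of_cycle {a : N} {c : ℕ} (hc : 1 ≤ c) (h : t.par^[c] a = a) : a = t.root := by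
  obtain ⟨d, hd⟩ := t.reaches_root a
  have h1 : t.par^[d * c] a = a := t.iterate_cycle h d
  have h2 : d ≤ d * c := Nat.le_mul_of_pos_right d hc
  have : t.par^[d * c] a = t.root := by
    rw [← Nat.sub_add_cancel h2, Function.iterate_add_apply, hd, iterate_par_root]
  rw [h1] at this; exact this

lemma anc_antisymm {a b : N} (h1 : t.anc a b) (h2 : t.anc b a) : a = b := by
  obtain ⟨k, hk⟩ := h1; obtain ⟨l, hl⟩ := h2
  rcases Nat.eq_zero_or_pos (k + l) with h | h
  · obtain ⟨rfl, rfl⟩ := Nat.add_eq_zero.mp h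
    rw [← hk, ← hl]; rfl
  · have hcy : t.par^[k + l] a = a := by rw [Function.iterate_add_apply, hl, hk]
    have ha : a = t.root := t.eq_root_of_cycle h hcy
    subst ha
    exact (t.eq_root_of_anc_root ⟨l, hl⟩).symm

lemma anc_total_of_anc {a b n : N} (h1 : t.anc a n) (h2 : t.anc b n) :
    t.anc a b ∨ t.anc b a := by
  obtain ⟨k, hk⟩ := h1; obtain ⟨l, hl⟩ := h2
  rcases le_total k l with h | h
  · right
    exact ⟨l - k, by rw [← hk, ← Function.iterate_add_apply, Nat.sub_add_cancel h, hl]⟩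
  · left
    exact ⟨k - l, by rw [← hl, ← Function.iterate_add_apply, Nat.sub_add_cancel h, hk]⟩

lemma anc_par_of_ne {b n : N} (h : t.anc b n) (hne : b ≠ n) : t.anc b (t.par n) := by
  obtain ⟨k, hk⟩ := h
  match k, hk with
  | 0, hk => exact absurd hk.symm hne
  | k + 1, hk => exact ⟨k, by rw [← hk, Function.iterate_succ_apply]⟩

lemma dist_spec {a n : N} (h : t.anc a n) : t.par^[t.dist a n] n = a := by
  have : {k : ℕ | t.par^[k] n = a}.Nonempty := h
  exact Nat.sInf_mem this

lemma dist_le {a n : N} {k : ℕ} (h : t.par^[k] n = a) : t.dist a n ≤ k :=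
  Nat.sInf_le h

lemma dist_self (a : N) : t.dist a a = 0 :=
  Nat.le_zero.mp (t.dist_le rfl)

lemma eq_of_dist_eq_zero {a n : N} (h : t.anc a n) (hd : t.dist a n = 0) : a = n := by
  have := t.dist_spec h; rw [hd] at this; exact this.symm

lemma anc_iterate {a n : N} (h : t.anc a n) {k : ℕ} (hk : k ≤ t.dist a n) :
    t.anc a (t.par^[k] n) := by
  refine ⟨t.dist a n - k, ?_⟩
  rw [← Function.iterate_add_apply, Nat.sub_add_cancel hk, t.dist_spec h]

lemma dist_iterate {a n : N} (h : t.anc a n) {k : ℕ} (hk : k ≤ t.dist a n) :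
    t.dist a (t.par^[k] n) = t.dist a n - k := by
  refine le_antisymm (t.dist_le ?_) ?_
  · rw [← Function.iterate_add_apply, Nat.sub_add_cancel hk, t.dist_spec h]
  · have h2 : t.par^[t.dist a (t.par^[k] n) + k] n = a := by
      rw [Function.iterate_add_apply, t.dist_spec (t.anc_iterate h hk)]
    have := t.dist_le h2
    omega

lemma iterate_ne_root_of_lt_dist {a n : N} (h : t.anc a n) {k : ℕ} (hk : k < t.dist a n) :
    t.par^[k] n ≠ t.root := by
  intro hr
  have : t.par^[k] n = a := by
    have h2 : t.anc a (t.par^[k] n) := t.anc_iterate h hk.le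
    rw [hr] at h2
    rw [hr, t.eq_root_of_anc_root h2]
  exact absurd (t.dist_le this) (by omega)

lemma dist_par_add_one {a n : N} (h : t.anc a n) (hne : a ≠ n) :
    t.dist a n = t.dist a (t.par n) + 1 := by
  have h1 : t.dist a n ≠ 0 := fun hd => hne (t.eq_of_dist_eq_zero h hd)
  have := t.dist_iterate h (k := 1) (by omega)
  simp only [Function.iterate_one] at this
  omega

/-- For a child `c` of `a` with `c ⪯ n`, we have `a ⪯ n`,
`dist a n = dist c n + 1`, and `par^[dist c n] n = c`. -/
lemma child_dist {a c n : N} (hc : c ∈ t.children a) (hcn : t.anc c n) :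
    t.anc a n ∧ t.dist a n = t.dist c n + 1 := by
  obtain ⟨hcr, hpc⟩ := hc
  have hcc : t.par^[t.dist c n] n = c := t.dist_spec hcn
  have han : t.anc a n := ⟨t.dist c n + 1, by
    rw [Function.iterate_succ_apply', hcc, hpc]⟩
  refine ⟨han, le_antisymm (t.dist_le (by rw [Function.iterate_succ_apply', hcc, hpc])) ?_⟩
  by_contra hlt
  push_neg at hlt
  have hle : t.dist a n ≤ t.dist c n := by omega
  -- then a is a descendant-or-equal ancestor: anc c a
  have key : t.par^[(t.dist c n - t.dist a n) + t.dist a n] n = c := by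
    rw [Nat.sub_add_cancel hle, hcc]
  rw [Function.iterate_add_apply, t.dist_spec han] at key
  have hca : t.anc c a := ⟨_, key⟩
  have hac : t.anc a c := ⟨1, by simpa using hpc⟩
  have : a = c := t.anc_antisymm hac hca
  subst this
  exact hcr (t.eq_root_of_par_eq_self hpc)

lemma depth_spec (n : N) : t.par^[t.depth n] n = t.root :=
  Nat.sInf_mem (t.reaches_root n)

/-- The set of ancestors of a node is finite. -/
lemma finite_anc (n : N) : {b : N | t.anc b n}.Finite := by
  apply Set.Finite.subset (Set.finite_Iic (t.depth n) |>.image (fun k => t.par^[k] n))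
  rintro b ⟨k, hk⟩
  rcases le_or_gt k (t.depth n) with h | h
  · exact ⟨k, Set.mem_Iic.mpr h, hk⟩
  · refine ⟨t.depth n, Set.mem_Iic.mpr le_rfl, ?_⟩
    show t.par^[t.depth n] n = b
    rw [t.depth_spec n, ← hk, ← Nat.sub_add_cancel h.le, Function.iterate_add_apply,
      t.depth_spec n, iterate_par_root]

end ParentTree

namespace Policy

variable {N : Type*} {t : ParentTree N} (P : Policy t)

lemma relProbE_self (a : N) : P.relProbE a a = 1 := by
  simp [relProbE, t.dist_self]

lemma relProbE_le_one {a n : N} : P.relProbE a n ≤ 1 := by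
  apply Finset.prod_le_one
  · intro j _; exact zero_le
  · intro j _; exact ENNReal.ofReal_le_one.mpr (P.cond_le_one _)

/-- Splitting off the top factor: if `c` is the child of `a` on the path to `n`
(`k ≤ dist c n`), then `relProbE a (par^[k] n) = relProbE c (par^[k] n) * ofReal (cond c)`. -/
lemma relProbE_top_split {a c n : N} (hc : c ∈ t.children a) (hcn : t.anc c n)
    {k : ℕ} (hk : k ≤ t.dist c n) :
    P.relProbE a (t.par^[k] n) =
      P.relProbE c (t.par^[k] n) * ENNReal.ofReal (P.cond c) := by
  obtain ⟨han, hdan⟩ := t.child_dist hc hcn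
  have e := t.dist_spec hcn
  have h1 : t.dist c (t.par^[k] n) = t.dist c n - k := t.dist_iterate hcn hk
  have h2 : t.dist a (t.par^[k] n) = t.dist a n - k := t.dist_iterate han (by omega)
  rw [relProbE, relProbE, h1, h2, hdan, Nat.succ_sub hk, Finset.prod_range_succ]
  congr 1
  rw [← Function.iterate_add_apply, Nat.sub_add_cancel hk, e]

lemma one_le_rootSlend {a n : N} : 1 ≤ P.rootSlend a n := by
  rw [rootSlend]
  split
  case isTrue h =>
    calc (1:ℝ≥0∞) = (P.relProbE a (t.par^[t.dist a n] n))⁻¹ := by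
          rw [t.dist_spec h, P.relProbE_self]; simp
    _ ≤ _ := Finset.single_le_sum (f := fun k => (P.relProbE a (t.par^[k] n))⁻¹)
          (fun _ _ => zero_le) (Finset.self_mem_range_succ _)
  case isFalse => exact le_top

lemma rootSlend_self (a : N) : P.rootSlend a a = 1 := by
  rw [rootSlend, if_pos (t.anc_refl a), t.dist_self]
  simp [P.relProbE_self]

lemma rootSlend_eq_of_anc {a n : N} (h : t.anc a n) :
    P.rootSlend a n =
      ∑ k ∈ Finset.range (t.dist a n + 1), (P.relProbE a (t.par^[k] n))⁻¹ :=
  if_pos h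

/-- Each term of the slenderness sum is at least 1, so `Λ(n|a) ≥ dist a n + 1`. -/
lemma dist_add_one_le_rootSlend {a n : N} (h : t.anc a n) :
    (t.dist a n + 1 : ℕ) ≤ P.rootSlend a n := by
  rw [P.rootSlend_eq_of_anc h]
  calc ((t.dist a n + 1 : ℕ) : ℝ≥0∞)
      = ∑ _k ∈ Finset.range (t.dist a n + 1), 1 := by simp
    _ ≤ _ := Finset.sum_le_sum (fun k _ => ENNReal.one_le_inv.mpr P.relProbE_le_one)

lemma two_le_rootSlend_of_sanc {a n : N} (h : t.sanc a n) : 2 ≤ P.rootSlend a n := by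
  have h1 : 1 ≤ t.dist a n := by
    rcases Nat.eq_zero_or_pos (t.dist a n) with h0 | h0
    · exact absurd (t.eq_of_dist_eq_zero h.1 h0) h.2
    · exact h0
  calc (2:ℝ≥0∞) ≤ ((t.dist a n + 1 : ℕ) : ℝ≥0∞) := by
        rw [show ((2:ℝ≥0∞)) = ((2:ℕ):ℝ≥0∞) by simp]
        exact Nat.cast_le.mpr (by omega)
    _ ≤ _ := P.dist_add_one_le_rootSlend h.1

/-- Monotonicity: for `a ⪯ b ⪯ n`, `Λ(b|a) ≤ Λ(n|a)`. -/
lemma rootSlend_mono {a b n : N} (hab : t.anc a b) (hbn : t.anc b n) :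
    P.rootSlend a b ≤ P.rootSlend a n := by
  have han : t.anc a n := t.anc_trans hab hbn
  rw [P.rootSlend_eq_of_anc hab, P.rootSlend_eq_of_anc han]
  set k := t.dist b n with hk
  have hbe : t.par^[k] n = b := t.dist_spec hbn
  have hkd : k ≤ t.dist a n := by
    by_contra hlt
    push_neg at hlt
    have key : t.par^[(k - t.dist a n) + t.dist a n] n = b := by
      rw [Nat.sub_add_cancel hlt.le, hbe]
    rw [Function.iterate_add_apply, t.dist_spec han] at key
    have : a = b := t.anc_antisymm hab ⟨_, key⟩
    subst this
    rw [← hk] at hlt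
    omega
  have hdab : t.dist a b = t.dist a n - k := by
    conv_lhs => rw [← hbe]
    exact t.dist_iterate han hkd
  rw [hdab]
  have hsplit : ∑ j ∈ Finset.range (t.dist a n - k + 1), (P.relProbE a (t.par^[j] b))⁻¹
      = ∑ j ∈ Finset.Ico k (t.dist a n + 1), (P.relProbE a (t.par^[j] n))⁻¹ := by
    rw [Finset.sum_Ico_eq_sum_range]
    have h2 : t.dist a n + 1 - k = t.dist a n - k + 1 := by omega
    rw [h2]
    refine Finset.sum_congr rfl (fun j _ => ?_)
    rw [← hbe, ← Function.iterate_add_apply, add_comm]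
  rw [hsplit]
  refine Finset.sum_le_sum_of_subset ?_
  intro x hx
  simp only [Finset.mem_Ico, Finset.mem_range] at hx ⊢
  omega

end Policy

namespace Policy

variable {N : Type*} {t : ParentTree N} (P : Policy t)

lemma rootSlend_child (hpos : ∀ m : N, m ≠ t.root → 0 < P.cond m)
    {a c n : N} (hc : c ∈ t.children a) (hcn : t.anc c n) :
    P.rootSlend a n = 1 + (ENNReal.ofReal (P.cond c))⁻¹ * P.rootSlend c n := by
  obtain ⟨han, hdan⟩ := t.child_dist hc hcn
  have hc0 : ENNReal.ofReal (P.cond c) ≠ 0 := by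
    simp only [ne_eq, ENNReal.ofReal_eq_zero, not_le]
    exact hpos c hc.1
  have hctop : ENNReal.ofReal (P.cond c) ≠ ⊤ := ENNReal.ofReal_ne_top
  rw [P.rootSlend_eq_of_anc han, P.rootSlend_eq_of_anc hcn, hdan]
  rw [show t.dist c n + 1 + 1 = (t.dist c n + 1) + 1 from rfl, Finset.sum_range_succ]
  have hlast : t.par^[t.dist c n + 1] n = a := by
    rw [Function.iterate_succ_apply', t.dist_spec hcn, hc.2]
  rw [hlast, P.relProbE_self, inv_one]
  have hterm : ∀ k ∈ Finset.range (t.dist c n + 1),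
      (P.relProbE a (t.par^[k] n))⁻¹ =
        (ENNReal.ofReal (P.cond c))⁻¹ * (P.relProbE c (t.par^[k] n))⁻¹ := by
    intro k hk
    rw [Finset.mem_range] at hk
    rw [P.relProbE_top_split hc hcn (by omega), ENNReal.mul_inv (Or.inr hctop) (Or.inr hc0),
      mul_comm]
  rw [Finset.sum_congr rfl hterm, ← Finset.mul_sum, add_comm]

end Policy

/-- Cardinality of a finite union of finite sets. -/
lemma ncard_biUnion_le' {α ι : Type*} (F : Finset ι) (f : ι → Set α)
    (hf : ∀ i ∈ F, (f i).Finite) : (⋃ i ∈ F, f i).ncard ≤ ∑ i ∈ F, (f i).ncard := by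
  classical
  induction F using Finset.cons_induction_on with
  | empty => simp
  | @cons a s ha ih =>
    rw [Finset.cons_eq_insert, Finset.set_biUnion_insert, Finset.sum_insert ha]
    calc (f a ∪ ⋃ i ∈ s, f i).ncard ≤ (f a).ncard + (⋃ i ∈ s, f i).ncard :=
          Set.ncard_union_le _ _
      _ ≤ _ := by
          have := ih (fun i hi' => hf i (by simp [hi']))
          omega

/-- The counting lemma: the number of descendants of `a` with slenderness at most `B`
is finite and at most `B`. -/
lemma counting {N : Type*} {t : ParentTree N} (hfin : ∀ n : N, (t.children n).Finite)
    (P : Policy t) (hpos : ∀ m : N, m ≠ t.root → 0 < P.cond m) :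
    ∀ (K : ℕ) (a : N) (B : ℝ), 0 ≤ B → B < K →
      {n : N | t.anc a n ∧ P.rootSlend a n ≤ ENNReal.ofReal B}.Finite ∧
      (({n : N | t.anc a n ∧ P.rootSlend a n ≤ ENNReal.ofReal B}.ncard : ℝ) ≤ B) := by
  intro K
  induction K with
  | zero => intro a B hB0 hBK; norm_num at hBK; linarith
  | succ K ih =>
    intro a B hB0 hBK
    set S : N → ℝ → Set N :=
      fun c B' => {n : N | t.anc c n ∧ P.rootSlend c n ≤ ENNReal.ofReal B'} with hS
    by_cases hB1 : B < 1
    · have hempty : S a B = ∅ := by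
        ext n
        simp only [hS, Set.mem_setOf_eq, Set.mem_empty_iff_false, iff_false, not_and]
        intro han hle
        have := (P.one_le_rootSlend (a := a) (n := n)).trans hle
        exact absurd (this.trans_lt (ENNReal.ofReal_lt_one.mpr hB1)) (lt_irrefl _)
      rw [show {n : N | t.anc a n ∧ P.rootSlend a n ≤ ENNReal.ofReal B} = S a B from rfl,
        hempty]
      simp [hB0]
    · push_neg at hB1
      set F := (hfin a).toFinset with hF
      set Bc : N → ℝ := fun c => P.cond c * (B - 1) with hBc
      have hBc0 : ∀ c, 0 ≤ Bc c := fun c => mul_nonneg (P.cond_nonneg c) (by linarith)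
      have hBcK : ∀ c, Bc c < K := by
        intro c
        have : Bc c ≤ 1 * (B - 1) :=
          mul_le_mul_of_nonneg_right (P.cond_le_one c) (by linarith)
        push_cast at hBK
        linarith [this]
      have hkey : ∀ c ∈ F, ∀ n : N, t.anc c n → P.rootSlend a n ≤ ENNReal.ofReal B →
          P.rootSlend c n ≤ ENNReal.ofReal (Bc c) := by
        intro c hcF n hcn hle
        have hcch : c ∈ t.children a := (hfin a).mem_toFinset.mp hcF
        have hc0 : ENNReal.ofReal (P.cond c) ≠ 0 := by
          simp only [ne_eq, ENNReal.ofReal_eq_zero, not_le]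
          exact hpos c hcch.1
        have hctop : ENNReal.ofReal (P.cond c) ≠ ⊤ := ENNReal.ofReal_ne_top
        rw [P.rootSlend_child hpos hcch hcn] at hle
        have h1 : (ENNReal.ofReal (P.cond c))⁻¹ * P.rootSlend c n ≤ ENNReal.ofReal B - 1 :=
          ENNReal.le_sub_of_add_le_left (by norm_num) hle
        have h2 : ENNReal.ofReal (P.cond c) * ((ENNReal.ofReal (P.cond c))⁻¹ *
            P.rootSlend c n) = P.rootSlend c n := by
          rw [← mul_assoc, ENNReal.mul_inv_cancel hc0 hctop, one_mul]
        calc P.rootSlend c n = _ := h2.symm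
          _ ≤ ENNReal.ofReal (P.cond c) * (ENNReal.ofReal B - 1) :=
              mul_le_mul_right h1 _
          _ = ENNReal.ofReal (Bc c) := by
              rw [show (1:ℝ≥0∞) = ENNReal.ofReal 1 by simp, ← ENNReal.ofReal_sub _ (by norm_num),
                ← ENNReal.ofReal_mul (P.cond_nonneg c)]
      have hsub : S a B ⊆ insert a (⋃ c ∈ F, S c (Bc c)) := by
        intro n hn
        obtain ⟨han, hL⟩ := hn
        by_cases hna : n = a
        · exact Set.mem_insert_iff.mpr (Or.inl hna)
        · have hD : 1 ≤ t.dist a n := by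
            rcases Nat.eq_zero_or_pos (t.dist a n) with h0 | h0
            · exact absurd (t.eq_of_dist_eq_zero han h0).symm hna
            · exact h0
          set c := t.par^[t.dist a n - 1] n with hc
          have hcch : c ∈ t.children a := by
            constructor
            · exact t.iterate_ne_root_of_lt_dist han (by omega)
            · have hit := Function.iterate_succ_apply' t.par (t.dist a n - 1) n
              rw [hc, ← hit, show (t.dist a n - 1).succ = t.dist a n by omega, t.dist_spec han]
          have hcn : t.anc c n := ⟨_, rfl⟩
          have hcF : c ∈ F := (hfin a).mem_toFinset.mpr hcch
          exact Set.mem_insert_iff.mpr (Or.inr (Set.mem_biUnion hcF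
            ⟨hcn, hkey c hcF n hcn hL⟩))
      have hUfin : (⋃ c ∈ F, S c (Bc c)).Finite :=
        Set.Finite.biUnion F.finite_toSet
          (fun c _ => (ih c (Bc c) (hBc0 c) (hBcK c)).1)
      have hSfin : (S a B).Finite := (hUfin.insert a).subset hsub
      refine ⟨hSfin, ?_⟩
      have hcard1 : (S a B).ncard ≤ 1 + ∑ c ∈ F, (S c (Bc c)).ncard := by
        calc (S a B).ncard ≤ (insert a (⋃ c ∈ F, S c (Bc c))).ncard :=
              Set.ncard_le_ncard hsub (hUfin.insert a)
          _ ≤ (⋃ c ∈ F, S c (Bc c)).ncard + 1 := Set.ncard_insert_le _ _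
          _ ≤ _ := by
              have h3 : (⋃ c ∈ F, S c (Bc c)).ncard ≤ ∑ c ∈ F, (S c (Bc c)).ncard :=
                ncard_biUnion_le' F _ (fun c _ => (ih c (Bc c) (hBc0 c) (hBcK c)).1)
              omega
      have hcard2 : (∑ c ∈ F, ((S c (Bc c)).ncard : ℝ)) ≤ (B - 1) := by
        calc ∑ c ∈ F, ((S c (Bc c)).ncard : ℝ) ≤ ∑ c ∈ F, Bc c :=
              Finset.sum_le_sum (fun c _ => (ih c (Bc c) (hBc0 c) (hBcK c)).2)
          _ = (∑ c ∈ F, P.cond c) * (B - 1) := by rw [Finset.sum_mul]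
          _ ≤ 1 * (B - 1) := by
              refine mul_le_mul_of_nonneg_right ?_ (by linarith)
              refine P.sum_le_one a F ?_
              rw [hF, Set.Finite.coe_toFinset]
          _ = B - 1 := by ring
      have : ((S a B).ncard : ℝ) ≤ 1 + ∑ c ∈ F, ((S c (Bc c)).ncard : ℝ) := by
        push_cast [← Nat.cast_sum]
        exact_mod_cast hcard1
      linarith

section Run

variable {N : Type*} {t : ParentTree N} {P : Policy t} {visit : ℕ → N} {Q : ℕ → Set N}
  {w : ℕ → ℝ≥0}

lemma queue_empty_propagate (hrun : IsRootLTS t P visit Q w) :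
    ∀ (s d : ℕ), 1 ≤ s → Q s = ∅ → Q (s + d) = ∅ := by
  intro s d hs he
  induction d with
  | zero => exact he
  | succ d ih => exact hrun.2.2.1 (s + d) (by omega) ih

lemma queue_nonempty (hrun : IsRootLTS t P visit Q w) {T s : ℕ} (hs1 : 1 ≤ s) (hsT : s ≤ T)
    (hQT : (Q T).Nonempty) : (Q s).Nonempty := by
  by_contra h
  rw [Set.not_nonempty_iff_eq_empty] at h
  have := queue_empty_propagate hrun s (T - s) hs1 h
  rw [show s + (T - s) = T by omega] at this
  rw [this] at hQT
  simp at hQT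

lemma visit_one (hrun : IsRootLTS t P visit Q w) : visit 1 = t.root := by
  have h1 : (Q 1).Nonempty := by rw [hrun.1]; exact ⟨_, rfl⟩
  have := (hrun.2.1 1 le_rfl h1).1
  rw [hrun.1] at this
  exact this

lemma root_not_mem (hrun : IsRootLTS t P visit Q w) :
    ∀ s, 2 ≤ s → t.root ∉ Q s := by
  intro s hs
  induction s, hs using Nat.le_induction with
  | base =>
    have h1 : (Q 1).Nonempty := by rw [hrun.1]; exact ⟨_, rfl⟩
    have hQsucc := (hrun.2.1 1 le_rfl h1).2.2
    rw [show (2:ℕ) = 1 + 1 from rfl, hQsucc, visit_one hrun, hrun.1]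
    simp [ParentTree.children]
  | succ s hs ih =>
    rcases Set.eq_empty_or_nonempty (Q s) with he | hne
    · rw [hrun.2.2.1 s (by omega) he]; simp
    · rw [(hrun.2.1 s (by omega) hne).2.2]
      rintro (⟨h, -⟩ | ⟨h, -⟩)
      · exact ih h
      · exact h rfl

/-- Every strict ancestor of a queued node has been visited at an earlier step
with nonempty queue. -/
lemma anc_visited (hrun : IsRootLTS t P visit Q w) :
    ∀ s, 1 ≤ s → ∀ n ∈ Q s, ∀ b, t.sanc b n →
      ∃ u, 1 ≤ u ∧ u < s ∧ (Q u).Nonempty ∧ visit u = b := by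
  intro s hs
  induction s, hs using Nat.le_induction with
  | base =>
    intro n hn b hb
    rw [hrun.1] at hn
    rw [Set.mem_singleton_iff] at hn
    subst hn
    exact absurd (t.eq_root_of_anc_root hb.1) hb.2
  | succ s hs ih =>
    intro n hn b hb
    rcases Set.eq_empty_or_nonempty (Q s) with he | hQs
    · rw [hrun.2.2.1 s hs he] at hn; simp at hn
    · obtain ⟨hvmem, -, hQsucc⟩ := hrun.2.1 s hs hQs
      rw [hQsucc] at hn
      rcases hn with ⟨hn, -⟩ | hch
      · obtain ⟨u, h1, h2, h3, h4⟩ := ih n hn b hb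
        exact ⟨u, h1, by omega, h3, h4⟩
      · by_cases hbv : b = visit s
        · exact ⟨s, hs, by omega, hQs, hbv.symm⟩
        · have hbn : t.anc b (t.par n) := t.anc_par_of_ne hb.1 hb.2
          rw [hch.2] at hbn
          obtain ⟨u, h1, h2, h3, h4⟩ := ih (visit s) hvmem b ⟨hbn, hbv⟩
          exact ⟨u, h1, by omega, h3, h4⟩

/-- At every step `s ≤ T`, the queue contains an ancestor of `visit T`. -/
lemma queue_anc_target (hrun : IsRootLTS t P visit Q w) {T : ℕ} (hT : 1 ≤ T)
    (hQT : (Q T).Nonempty) :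
    ∀ k s, 1 ≤ s → s + k = T → ∃ a ∈ Q s, t.anc a (visit T) := by
  intro k
  induction k with
  | zero =>
    intro s hs hsk
    have : s = T := by omega
    subst this
    exact ⟨visit s, (hrun.2.1 s hT hQT).1, t.anc_refl _⟩
  | succ k ih =>
    intro s hs hsk
    obtain ⟨a, ha, hanc⟩ := ih (s + 1) (by omega) (by omega)
    have hQs : (Q s).Nonempty := queue_nonempty hrun hs (by omega) hQT
    obtain ⟨hv, -, hQsucc⟩ := hrun.2.1 s hs hQs
    rw [hQsucc] at ha
    rcases ha with ⟨ha, -⟩ | hch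
    · exact ⟨a, ha, hanc⟩
    · refine ⟨visit s, hv, t.anc_trans ⟨1, ?_⟩ hanc⟩
      simpa using hch.2

end Run

/-- robust √LTS guarantee: with input rerooting weights `ω_t > 0`,
`Ω_{≤t} = Σ_{k≤t} ω_k`, and rerooting weights `w_t = ω_t/Ω_{≤t}`, if `n_T` is visited at
step `T` of a √LTS run with these weights, then for every subtask decomposition
`T_1 < … < T_m` of `n_T`,
`T ≤ (1 + ln(Ω_{<T}/ω_1)) · max_{1 ≤ i < m} (Ω_{≤T_i}/ω_{T_i}) Λ(n_{T_{i+1}} | n_{T_i})`. -/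
theorem stmt12 {N : Type*} (t : ParentTree N) (hfin : ∀ n : N, (t.children n).Finite)
    (P : Policy t) (hpos : ∀ m : N, m ≠ t.root → 0 < P.cond m)
    (ω : ℕ → ℝ≥0) (hω : ∀ k : ℕ, 1 ≤ k → 0 < ω k)
    (visit : ℕ → N) (Q : ℕ → Set N)
    (hrun : IsRootLTS t P visit Q (fun k => ω k / ∑ j ∈ Finset.Icc 1 k, ω j))
    (T : ℕ) (hT : 1 ≤ T) (hQT : (Q T).Nonempty)
    (m : ℕ) (hm : 2 ≤ m) (Ts : ℕ → ℕ)
    (hTs1 : 1 ≤ Ts 1) (hTsm : Ts m = T)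
    (hmono : ∀ i j : ℕ, 1 ≤ i → i < j → j ≤ m → Ts i < Ts j)
    (hfirst : visit (Ts 1) = t.root)
    (hchain : ∀ i : ℕ, 1 ≤ i → i < m → t.sanc (visit (Ts i)) (visit (Ts (i + 1)))) :
    (T : ℝ≥0∞) ≤
      ENNReal.ofReal
          (1 + Real.log ((∑ k ∈ Finset.Ico 1 T, (ω k : ℝ)) / (ω 1 : ℝ))) *
        (Finset.Ico 1 m).sup (fun i =>
          ((∑ k ∈ Finset.Icc 1 (Ts i), ω k : ℝ≥0) : ℝ≥0∞) / ((ω (Ts i) : ℝ≥0) : ℝ≥0∞) *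
            P.rootSlend (visit (Ts i)) (visit (Ts (i + 1)))) := by
  classical
  set w : ℕ → ℝ≥0 := fun k => ω k / ∑ j ∈ Finset.Icc 1 k, ω j with hw
  set R : ℝ := (∑ k ∈ Finset.Ico 1 T, (ω k : ℝ)) / (ω 1 : ℝ) with hR
  -- basic facts about the weights
  have hΩpos : ∀ k, 1 ≤ k → 0 < ∑ j ∈ Finset.Icc 1 k, ω j := fun k hk =>
    lt_of_lt_of_le (hω 1 le_rfl)
      (Finset.single_le_sum (fun j _ => zero_le) (Finset.mem_Icc.mpr ⟨le_rfl, hk⟩))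
  have hΩrpos : ∀ k, 1 ≤ k → 0 < ∑ j ∈ Finset.Icc 1 k, (ω j : ℝ) := by
    intro k hk
    have := hΩpos k hk
    push_cast [← NNReal.coe_sum] at *
    exact_mod_cast this
  have hwr : ∀ k, (w k : ℝ) = (ω k : ℝ) / ∑ j ∈ Finset.Icc 1 k, (ω j : ℝ) := by
    intro k
    rw [hw]
    push_cast [NNReal.coe_div]
    ring
  have hwpos : ∀ k, 1 ≤ k → 0 < (w k : ℝ) := by
    intro k hk
    rw [hwr]
    exact div_pos (by exact_mod_cast hω k hk) (hΩrpos k hk)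
  have hwne : ∀ k, 1 ≤ k → ((w k : ℝ≥0) : ℝ≥0∞) ≠ 0 := by
    intro k hk
    simp only [ne_eq, ENNReal.coe_eq_zero]
    exact_mod_cast (hwpos k hk).ne'
  have hwle1 : ∀ k, 1 ≤ k → (w k : ℝ) ≤ 1 := by
    intro k hk
    rw [hwr]
    rw [div_le_one (hΩrpos k hk)]
    exact Finset.single_le_sum (fun j _ => (ω j).coe_nonneg)
      (Finset.mem_Icc.mpr ⟨hk, le_rfl⟩)
  have hwle1' : ∀ k, 1 ≤ k → ((w k : ℝ≥0) : ℝ≥0∞) ≤ 1 := by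
    intro k hk
    rw [show (1:ℝ≥0∞) = ((1:ℝ≥0):ℝ≥0∞) by simp]
    exact ENNReal.coe_le_coe.mpr (by exact_mod_cast hwle1 k hk)
  -- the cost bound and the target quantity
  set fC : ℕ → ℝ≥0∞ := fun i =>
    (P.rootSlend (visit (Ts i)) (visit (Ts (i + 1))) - 1) / ((w (Ts i) : ℝ≥0) : ℝ≥0∞)
    with hfC
  set M : ℝ≥0∞ := (Finset.Ico 1 m).sup (fun i =>
    ((∑ k ∈ Finset.Icc 1 (Ts i), ω k : ℝ≥0) : ℝ≥0∞) / ((ω (Ts i) : ℝ≥0) : ℝ≥0∞) *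
      P.rootSlend (visit (Ts i)) (visit (Ts (i + 1)))) with hM
  set C : ℝ≥0∞ := (Finset.Ico 1 m).sup fC with hC
  have hTs_pos : ∀ i, 1 ≤ i → i ≤ m → 1 ≤ Ts i := by
    intro i h1 h2
    rcases eq_or_lt_of_le h1 with h | h
    · rw [← h]; exact hTs1
    · exact le_trans hTs1 (hmono 1 i le_rfl h h2).le
  have hTs_lt : ∀ i, 1 ≤ i → i < m → Ts i < T := by
    intro i h1 h2
    rw [← hTsm]
    exact hmono i m h1 h2 le_rfl
  have hT2 : 2 ≤ T := by
    have := hTs_lt 1 le_rfl (by omega)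
    omega
  -- coercion of w to division in ℝ≥0∞
  have hwcoe : ∀ k, 1 ≤ k → ((w k : ℝ≥0) : ℝ≥0∞) =
      ((ω k : ℝ≥0) : ℝ≥0∞) / ((∑ j ∈ Finset.Icc 1 k, ω j : ℝ≥0) : ℝ≥0∞) := by
    intro k hk
    rw [hw]
    exact ENNReal.coe_div (hΩpos k hk).ne'
  have hwinv : ∀ k, 1 ≤ k → (((w k : ℝ≥0) : ℝ≥0∞))⁻¹ =
      ((∑ j ∈ Finset.Icc 1 k, ω j : ℝ≥0) : ℝ≥0∞) / ((ω k : ℝ≥0) : ℝ≥0∞) := by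
    intro k hk
    rw [hwcoe k hk]
    exact ENNReal.inv_div (Or.inr ENNReal.coe_ne_top)
      (Or.inr (by exact_mod_cast (hω k hk).ne'))
  have hf_eq : ∀ i, 1 ≤ i → i < m → fC i =
      (P.rootSlend (visit (Ts i)) (visit (Ts (i + 1))) - 1) *
        (((∑ j ∈ Finset.Icc 1 (Ts i), ω j : ℝ≥0) : ℝ≥0∞) / ((ω (Ts i) : ℝ≥0) : ℝ≥0∞)) := by
    intro i h1 h2
    rw [hfC]
    simp only []
    rw [div_eq_mul_inv, hwinv (Ts i) (hTs_pos i h1 (by omega))]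
  have hC_le_M : C ≤ M := by
    rw [hC, hM]
    refine Finset.sup_le fun i hi => ?_
    rw [Finset.mem_Ico] at hi
    refine le_trans ?_ (Finset.le_sup (Finset.mem_Ico.mpr hi))
    rw [hf_eq i hi.1 hi.2]
    rw [mul_comm]
    exact mul_le_mul_right (tsub_le_self) _
  have hone_le_C : 1 ≤ C := by
    have h2L : 2 ≤ P.rootSlend (visit (Ts 1)) (visit (Ts 2)) :=
      P.two_le_rootSlend_of_sanc (by simpa using hchain 1 le_rfl (by omega))
    have hf1 : 1 ≤ fC 1 := by
      rw [hfC]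
      simp only []
      rw [ENNReal.le_div_iff_mul_le (Or.inl (hwne (Ts 1) hTs1)) (Or.inl ENNReal.coe_ne_top),
        one_mul]
      refine le_trans (hwle1' (Ts 1) hTs1) ?_
      exact ENNReal.le_sub_of_add_le_left (by norm_num) (by simpa [one_add_one_eq_two] using h2L)
    exact le_trans hf1 (Finset.le_sup (Finset.mem_Ico.mpr ⟨le_rfl, by omega⟩))
  -- Step A: every node visited up to time T has cost at most C
  have hancC : ∀ a : N, t.anc a (visit T) → runCost t P visit Q w a ≤ C := by
    intro a hanc
    by_cases ha : a = t.root
    · rw [runCost, if_pos ha]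
      exact hone_le_C
    · -- find the chain segment containing a
      set I : Finset ℕ := (Finset.Ico 1 m).filter (fun i => t.sanc (visit (Ts i)) a) with hI
      have hI1 : 1 ∈ I := by
        rw [hI, Finset.mem_filter]
        exact ⟨Finset.mem_Ico.mpr ⟨le_rfl, by omega⟩, by
          rw [hfirst]; exact ⟨t.anc_root a, fun h => ha h.symm⟩⟩
      have hIne : I.Nonempty := ⟨1, hI1⟩
      set i₀ := I.max' hIne with hi₀
      have hi₀I : i₀ ∈ I := I.max'_mem hIne
      rw [hI, Finset.mem_filter, Finset.mem_Ico] at hi₀I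
      obtain ⟨⟨hi₀1, hi₀m⟩, hsanc⟩ := hi₀I
      -- chain ancestry towards the target
      have hchain_anc : ∀ d : ℕ, d < m → t.anc (visit (Ts (m - d))) (visit T) := by
        intro d
        induction d with
        | zero => intro _; rw [Nat.sub_zero, hTsm]; exact t.anc_refl _
        | succ d ih =>
          intro hdm
          have h1 := hchain (m - (d + 1)) (by omega) (by omega)
          rw [show m - (d + 1) + 1 = m - d by omega] at h1
          exact t.anc_trans h1.1 (ih (by omega))
      have hnext_anc : t.anc (visit (Ts (i₀ + 1))) (visit T) := by
        have := hchain_anc (m - (i₀ + 1)) (by omega)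
        rwa [show m - (m - (i₀ + 1)) = i₀ + 1 by omega] at this
      have hanc_next : t.anc a (visit (Ts (i₀ + 1))) := by
        rcases t.anc_total_of_anc hanc hnext_anc with h | h
        · exact h
        · by_cases hba : visit (Ts (i₀ + 1)) = a
          · rw [← hba]; exact t.anc_refl _
          · rcases eq_or_lt_of_le (show i₀ + 1 ≤ m by omega) with he | hlt
            · exfalso
              rw [he, hTsm] at h hba
              exact hba (t.anc_antisymm h hanc)
            · exfalso
              have : i₀ + 1 ∈ I := by
                rw [hI, Finset.mem_filter]
                exact ⟨Finset.mem_Ico.mpr ⟨by omega, hlt⟩, ⟨h, hba⟩⟩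
              have := I.le_max' _ this
              omega
      -- bound the cost via the reroot at step Ts i₀
      rw [runCost, if_neg ha]
      refine iInf₂_le_of_le (Ts i₀) ⟨hTs_pos i₀ hi₀1 (by omega),
        queue_nonempty hrun (hTs_pos i₀ hi₀1 (by omega)) (hTs_lt i₀ hi₀1 hi₀m).le hQT,
        hsanc⟩ ?_
      refine le_trans ?_ (Finset.le_sup (f := fC) (Finset.mem_Ico.mpr ⟨hi₀1, hi₀m⟩))
      rw [hfC]
      simp only []
      exact ENNReal.div_le_div_right
        (tsub_le_tsub_right (P.rootSlend_mono hsanc.1 hanc_next) 1) _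
  have hcost : ∀ s, 1 ≤ s → s ≤ T → runCost t P visit Q w (visit s) ≤ C := by
    intro s hs hsT
    obtain ⟨a, haQ, hanc⟩ :=
      queue_anc_target hrun hT hQT (T - s) s hs (by omega)
    have hQs : (Q s).Nonempty := queue_nonempty hrun hs hsT hQT
    exact le_trans ((hrun.2.1 s hs hQs).2.1 a haQ) (hancC a hanc)
  -- Step B: choose the witnessing reroot step for each visited node
  have hstep : ∀ u, 2 ≤ u → u ≤ T → ∃ s, 1 ≤ s ∧ s < u ∧ (Q s).Nonempty ∧
      t.sanc (visit s) (visit u) ∧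
      P.rootSlend (visit s) (visit u) ≤ 1 + ((w s : ℝ≥0) : ℝ≥0∞) * C := by
    intro u hu2 huT
    have hQu : (Q u).Nonempty := queue_nonempty hrun (by omega) huT hQT
    have hvu_mem := (hrun.2.1 u (by omega) hQu).1
    have hvu_ne_root : visit u ≠ t.root := fun h => root_not_mem hrun u hu2 (h ▸ hvu_mem)
    set SS := {s : ℕ | 1 ≤ s ∧ (Q s).Nonempty ∧ t.sanc (visit s) (visit u)} with hSS
    have hsancroot : t.sanc t.root (visit u) :=
      ⟨t.anc_root _, fun h => hvu_ne_root h.symm⟩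
    obtain ⟨u₀, hu₀1, hu₀lt, hu₀Q, hu₀v⟩ :=
      anc_visited hrun u (by omega) (visit u) hvu_mem t.root hsancroot
    have hSSne : SS.Nonempty := ⟨u₀, hu₀1, hu₀Q, by rw [hu₀v]; exact hsancroot⟩
    have hSSfin : SS.Finite := by
      apply Set.Finite.of_finite_image (f := visit)
      · apply Set.Finite.subset (t.finite_anc (visit u))
        rintro b ⟨s, hs, rfl⟩
        exact hs.2.2.1
      · intro s hs s' hs' hv
        exact hrun.2.2.2 s s' hs.1 hs'.1 hs.2.1 hs'.2.1 hv
    obtain ⟨s₀, hs₀F, hs₀min⟩ := hSSfin.toFinset.exists_min_image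
      (fun s => (P.rootSlend (visit s) (visit u) - 1) / ((w s : ℝ≥0) : ℝ≥0∞))
      ⟨hSSne.choose, hSSfin.mem_toFinset.mpr hSSne.choose_spec⟩
    have hs₀SS : s₀ ∈ SS := hSSfin.mem_toFinset.mp hs₀F
    have h1 : (P.rootSlend (visit s₀) (visit u) - 1) / ((w s₀ : ℝ≥0) : ℝ≥0∞) ≤ C := by
      refine le_trans ?_ (hcost u (by omega) huT)
      rw [runCost, if_neg hvu_ne_root]
      exact le_iInf₂ fun s hsmem => hs₀min s (hSSfin.mem_toFinset.mpr hsmem)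
    have hlt : s₀ < u := by
      obtain ⟨u', h1', h2', h3', h4'⟩ :=
        anc_visited hrun u (by omega) (visit u) hvu_mem (visit s₀) hs₀SS.2.2
      have := hrun.2.2.2 s₀ u' hs₀SS.1 h1' hs₀SS.2.1 h3' h4'.symm
      omega
    have h2 : P.rootSlend (visit s₀) (visit u) - 1 ≤ ((w s₀ : ℝ≥0) : ℝ≥0∞) * C := by
      have := (ENNReal.div_le_iff (hwne s₀ hs₀SS.1) ENNReal.coe_ne_top).mp h1
      rwa [mul_comm] at this
    have h3 : P.rootSlend (visit s₀) (visit u) ≤ 1 + ((w s₀ : ℝ≥0) : ℝ≥0∞) * C := by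
      rw [add_comm]
      exact tsub_le_iff_right.mp h2
    exact ⟨s₀, hs₀SS.1, hlt, hs₀SS.2.1, hs₀SS.2.2, h3⟩
  -- dispose of the infinite case
  rcases eq_or_ne M ⊤ with hMtop | hMtop
  · rw [hMtop, ENNReal.mul_top]
    · exact le_top
    · simp only [ne_eq, ENNReal.ofReal_eq_zero, not_le]
      have hR1 : (1:ℝ) ≤ R := by
        rw [hR, le_div_iff₀ (by exact_mod_cast hω 1 le_rfl), one_mul]
        exact Finset.single_le_sum (fun j _ => (ω j).coe_nonneg)
          (Finset.mem_Ico.mpr ⟨le_rfl, by omega⟩)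
      have := Real.log_nonneg hR1
      linarith
  -- finite case
  have hCtop : C ≠ ⊤ := by
    intro h
    rw [h] at hC_le_M
    exact hMtop (top_le_iff.mp hC_le_M)
  set Creal : ℝ := C.toReal with hCrdef
  have hCreal : C = ENNReal.ofReal Creal := (ENNReal.ofReal_toReal hCtop).symm
  have hCreal0 : 0 ≤ Creal := ENNReal.toReal_nonneg
  -- choice function for the reroot steps
  have hex' : ∀ u, ∃ s, 2 ≤ u → u ≤ T → (1 ≤ s ∧ s < u ∧ (Q s).Nonempty ∧
      t.sanc (visit s) (visit u) ∧
      P.rootSlend (visit s) (visit u) ≤ 1 + ((w s : ℝ≥0) : ℝ≥0∞) * C) := by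
    intro u
    by_cases h : 2 ≤ u ∧ u ≤ T
    · obtain ⟨s, hs⟩ := hstep u h.1 h.2
      exact ⟨s, fun _ _ => hs⟩
    · exact ⟨1, fun h1 h2 => absurd ⟨h1, h2⟩ h⟩
  choose r hr using hex'
  -- Step C: counting
  have hfiber_bound : ∀ s ∈ Finset.Icc 1 (T - 1),
      (((Finset.Icc 2 T).filter (fun u => r u = s)).card : ℝ) ≤ (w s : ℝ) * Creal := by
    intro s hs
    rw [Finset.mem_Icc] at hs
    set Bs : ℝ := 1 + (w s : ℝ) * Creal with hBs
    have hws0 : (0:ℝ) ≤ (w s : ℝ) := (w s).coe_nonneg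
    have hBs1 : (1:ℝ) ≤ Bs := by
      rw [hBs]
      nlinarith
    obtain ⟨hSfin, hScard⟩ := counting hfin P hpos (⌊Bs⌋₊ + 1) (visit s) Bs (by linarith)
      (by push_cast; exact_mod_cast Nat.lt_succ_floor Bs)
    set Sset := {n | t.anc (visit s) n ∧ P.rootSlend (visit s) n ≤ ENNReal.ofReal Bs}
      with hSset
    have hvs_mem : visit s ∈ Sset := by
      rw [hSset]
      exact ⟨t.anc_refl _, by rw [P.rootSlend_self]; exact ENNReal.one_le_ofReal.mpr hBs1⟩
    have hDfin : (Sset \ {visit s}).Finite := hSfin.diff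
    have hBsE : (1:ℝ≥0∞) + ((w s : ℝ≥0) : ℝ≥0∞) * C = ENNReal.ofReal Bs := by
      rw [hCreal, hBs, ENNReal.ofReal_add (by norm_num) (by nlinarith),
        ENNReal.ofReal_one, ENNReal.ofReal_mul hws0, ENNReal.ofReal_coe_nnreal]
    have hmaps : ∀ u ∈ (Finset.Icc 2 T).filter (fun u => r u = s),
        visit u ∈ hDfin.toFinset := by
      intro u hu
      rw [Finset.mem_filter, Finset.mem_Icc] at hu
      obtain ⟨⟨hu2, huT⟩, hru⟩ := hu
      obtain ⟨h1, h2, h3, h4, h5⟩ := hr u hu2 huT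
      rw [hru] at h2 h4 h5
      rw [Set.Finite.mem_toFinset, Set.mem_diff]
      constructor
      · rw [hSset]
        exact ⟨h4.1, by rw [← hBsE]; exact h5⟩
      · rw [Set.mem_singleton_iff]
        intro hvv
        have hQu : (Q u).Nonempty := queue_nonempty hrun (by omega) huT hQT
        have hQs : (Q s).Nonempty := queue_nonempty hrun (by omega) (by omega) hQT
        have := hrun.2.2.2 u s (by omega) (by omega) hQu hQs hvv
        omega
    have hinj : Set.InjOn visit ((Finset.Icc 2 T).filter (fun u => r u = s)) := by
      intro u hu u' hu' hv
      simp only [Finset.coe_filter, Set.mem_setOf_eq, Finset.mem_Icc] at hu hu'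
      exact hrun.2.2.2 u u' (by omega) (by omega)
        (queue_nonempty hrun (by omega) hu.1.2 hQT)
        (queue_nonempty hrun (by omega) hu'.1.2 hQT) hv
    have hcard_le : ((Finset.Icc 2 T).filter (fun u => r u = s)).card ≤
        hDfin.toFinset.card :=
      Finset.card_le_card_of_injOn visit hmaps hinj
    have hd1 : (Sset \ {visit s}).ncard = Sset.ncard - 1 :=
      Set.ncard_diff_singleton_of_mem hvs_mem
    have hd2 : 1 ≤ Sset.ncard := (Set.ncard_pos hSfin).mpr ⟨_, hvs_mem⟩
    have hd3 : hDfin.toFinset.card = (Sset \ {visit s}).ncard :=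
      (Set.ncard_eq_toFinset_card _ hDfin).symm
    have : (((Finset.Icc 2 T).filter (fun u => r u = s)).card : ℝ) ≤
        (Sset.ncard : ℝ) - 1 := by
      have := hcard_le
      rw [hd3, hd1] at this
      have hcast : ((Sset.ncard - 1 : ℕ) : ℝ) = (Sset.ncard : ℝ) - 1 := by
        push_cast [Nat.cast_sub hd2]
        ring
      calc (((Finset.Icc 2 T).filter (fun u => r u = s)).card : ℝ)
          ≤ ((Sset.ncard - 1 : ℕ) : ℝ) := by exact_mod_cast this
        _ = (Sset.ncard : ℝ) - 1 := hcast
    have h9 : (Sset.ncard : ℝ) - 1 ≤ Bs - 1 := by linarith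
    have h10 := this.trans h9
    rw [hBs] at h10
    linarith
  -- summing the fibers
  have hrmem : ∀ u ∈ Finset.Icc 2 T, r u ∈ Finset.Icc 1 (T - 1) := by
    intro u hu
    rw [Finset.mem_Icc] at hu ⊢
    obtain ⟨h1, h2, -⟩ := hr u hu.1 hu.2
    omega
  have hfiber := Finset.card_eq_sum_card_fiberwise hrmem
  have hcount : (T : ℝ) - 1 ≤ (∑ s ∈ Finset.Icc 1 (T - 1), (w s : ℝ)) * Creal := by
    have hTcard : ((Finset.Icc 2 T).card : ℝ) = (T : ℝ) - 1 := by
      rw [Nat.card_Icc, show T + 1 - 2 = T - 1 by omega, Nat.cast_sub (by omega)]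
      norm_num
    calc (T : ℝ) - 1 = ((Finset.Icc 2 T).card : ℝ) := hTcard.symm
      _ = ∑ s ∈ Finset.Icc 1 (T - 1),
            (((Finset.Icc 2 T).filter (fun u => r u = s)).card : ℝ) := by
          rw [hfiber]; push_cast; ring
      _ ≤ ∑ s ∈ Finset.Icc 1 (T - 1), (w s : ℝ) * Creal :=
          Finset.sum_le_sum hfiber_bound
      _ = (∑ s ∈ Finset.Icc 1 (T - 1), (w s : ℝ)) * Creal := by rw [Finset.sum_mul]
  -- Step D: the log bound
  have hlog : ∑ s ∈ Finset.Icc 1 (T - 1), (w s : ℝ) ≤ 1 + Real.log R := by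
    have hsplit : Finset.Icc 1 (T - 1) = insert 1 (Finset.Icc 2 (T - 1)) := by
      ext x
      simp only [Finset.mem_Icc, Finset.mem_insert]
      omega
    have hw1 : (w 1 : ℝ) = 1 := by
      rw [hwr 1]
      have h11 : ∑ j ∈ Finset.Icc 1 1, (ω j : ℝ) = (ω 1 : ℝ) := by simp
      rw [h11, div_self (by exact_mod_cast (hω 1 le_rfl).ne')]
    have hterm : ∀ s ∈ Finset.Icc 2 (T - 1), (w s : ℝ) ≤
        Real.log (∑ j ∈ Finset.Icc 1 s, (ω j : ℝ)) -
          Real.log (∑ j ∈ Finset.Icc 1 (s - 1), (ω j : ℝ)) := by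
      intro s hsm
      rw [Finset.mem_Icc] at hsm
      set A := ∑ j ∈ Finset.Icc 1 (s - 1), (ω j : ℝ) with hA
      set B := ∑ j ∈ Finset.Icc 1 s, (ω j : ℝ) with hB
      have hp1 : 0 < A := hΩrpos (s - 1) (by omega)
      have hp2 : 0 < B := hΩrpos s (by omega)
      have hsum : B = A + (ω s : ℝ) := by
        rw [hB, hA, show Finset.Icc 1 s = insert s (Finset.Icc 1 (s - 1)) by
          ext x; simp only [Finset.mem_Icc, Finset.mem_insert]; omega,
          Finset.sum_insert (by simp only [Finset.mem_Icc]; omega)]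
        ring
      have hlog1 : Real.log (A / B) ≤ A / B - 1 :=
        Real.log_le_sub_one_of_pos (div_pos hp1 hp2)
      rw [Real.log_div hp1.ne' hp2.ne'] at hlog1
      have hAB : A / B = 1 - (ω s : ℝ) / B := by
        field_simp
        linarith
      rw [hAB] at hlog1
      rw [hwr s, ← hB]
      have hfin' : (ω s : ℝ) / B ≤ Real.log B - Real.log A := by linarith
      exact hfin'
    have htel : ∑ s ∈ Finset.Icc 2 (T - 1),
        (Real.log (∑ j ∈ Finset.Icc 1 s, (ω j : ℝ)) -
          Real.log (∑ j ∈ Finset.Icc 1 (s - 1), (ω j : ℝ)))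
        = Real.log (∑ j ∈ Finset.Icc 1 (T - 1), (ω j : ℝ)) -
          Real.log (∑ j ∈ Finset.Icc 1 1, (ω j : ℝ)) := by
      set F : ℕ → ℝ := fun i => Real.log (∑ j ∈ Finset.Icc 1 (i + 1), (ω j : ℝ)) with hF
      have h1 : ∑ s ∈ Finset.Icc 2 (T - 1),
          (Real.log (∑ j ∈ Finset.Icc 1 s, (ω j : ℝ)) -
            Real.log (∑ j ∈ Finset.Icc 1 (s - 1), (ω j : ℝ)))
          = ∑ i ∈ Finset.range (T - 2), (F (i + 1) - F i) := by
        rw [show Finset.Icc 2 (T - 1) = Finset.Ico 2 (T - 1 + 1) by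
          rw [Finset.Ico_add_one_right_eq_Icc], Finset.sum_Ico_eq_sum_range,
          show T - 1 + 1 - 2 = T - 2 by omega]
        refine Finset.sum_congr rfl fun i _ => ?_
        rw [hF]
        simp only []
        rw [show 2 + i = i + 1 + 1 by omega, show i + 1 + 1 - 1 = i + 1 by omega]
      rw [h1, Finset.sum_range_sub F (T - 2), hF]
      simp only []
      rw [show T - 2 + 1 = T - 1 by omega, show (0:ℕ) + 1 = 1 by omega]
    have hIco : Finset.Ico 1 T = Finset.Icc 1 (T - 1) := by
      ext x
      simp only [Finset.mem_Ico, Finset.mem_Icc]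
      omega
    have hlogR : Real.log R = Real.log (∑ j ∈ Finset.Icc 1 (T - 1), (ω j : ℝ)) -
        Real.log (ω 1 : ℝ) := by
      rw [hR, hIco]
      exact Real.log_div (hΩrpos (T - 1) (by omega)).ne'
        (by exact_mod_cast (hω 1 le_rfl).ne')
    have hlast : ∑ j ∈ Finset.Icc 1 1, (ω j : ℝ) = (ω 1 : ℝ) := by simp
    rw [hsplit, Finset.sum_insert (by simp)]
    have h2 : ∑ s ∈ Finset.Icc 2 (T - 1), (w s : ℝ) ≤
        Real.log (∑ j ∈ Finset.Icc 1 (T - 1), (ω j : ℝ)) -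
          Real.log (∑ j ∈ Finset.Icc 1 1, (ω j : ℝ)) :=
      (Finset.sum_le_sum hterm).trans htel.le
    rw [hlast] at h2
    rw [hw1]
    linarith
  -- final assembly
  have hR1 : (1:ℝ) ≤ R := by
    rw [hR, le_div_iff₀ (by exact_mod_cast hω 1 le_rfl), one_mul]
    exact Finset.single_le_sum (fun j _ => (ω j).coe_nonneg)
      (Finset.mem_Ico.mpr ⟨le_rfl, by omega⟩)
  have hlogR0 : 0 ≤ Real.log R := Real.log_nonneg hR1
  have hwsum0 : 0 ≤ ∑ s ∈ Finset.Icc 1 (T - 1), (w s : ℝ) :=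
    Finset.sum_nonneg fun s _ => (w s).coe_nonneg
  have hreal : (T : ℝ) ≤ (1 + Real.log R) * (Creal + 1) := by
    have h1 : (∑ s ∈ Finset.Icc 1 (T - 1), (w s : ℝ)) * Creal ≤
        (1 + Real.log R) * Creal := mul_le_mul_of_nonneg_right hlog hCreal0
    nlinarith
  have hCM1 : ENNReal.ofReal (Creal + 1) ≤ M := by
    rw [ENNReal.ofReal_add hCreal0 (by norm_num), ← hCreal, ENNReal.ofReal_one]
    -- C + 1 ≤ M
    obtain ⟨i₁, hi₁, hCi⟩ := Finset.exists_mem_eq_sup (Finset.Ico 1 m)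
      ⟨1, Finset.mem_Ico.mpr ⟨le_rfl, by omega⟩⟩ fC
    rw [Finset.mem_Ico] at hi₁
    have hgoal : fC i₁ + 1 ≤ M := by
      rw [hf_eq i₁ hi₁.1 hi₁.2, hM]
      refine le_trans ?_ (Finset.le_sup (Finset.mem_Ico.mpr hi₁))
      set L := P.rootSlend (visit (Ts i₁)) (visit (Ts (i₁ + 1))) with hL
      set D := ((∑ j ∈ Finset.Icc 1 (Ts i₁), ω j : ℝ≥0) : ℝ≥0∞) /
        ((ω (Ts i₁) : ℝ≥0) : ℝ≥0∞) with hD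
      have hD1 : 1 ≤ D := by
        rw [hD, ENNReal.le_div_iff_mul_le
          (Or.inl (by exact_mod_cast (hω (Ts i₁) (hTs_pos i₁ hi₁.1 (by omega))).ne'))
          (Or.inl ENNReal.coe_ne_top), one_mul]
        have hs1 : ω (Ts i₁) ≤ ∑ j ∈ Finset.Icc 1 (Ts i₁), ω j :=
          Finset.single_le_sum (fun j _ => zero_le)
            (Finset.mem_Icc.mpr ⟨hTs_pos i₁ hi₁.1 (by omega), le_rfl⟩)
        exact ENNReal.coe_le_coe.mpr hs1
      have hL1 : 1 ≤ L := P.one_le_rootSlend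
      calc (L - 1) * D + 1 ≤ (L - 1) * D + D := by
            exact add_le_add_right hD1 _
        _ = ((L - 1) + 1) * D := by rw [add_mul, one_mul]
        _ = L * D := by rw [tsub_add_cancel_of_le hL1]
        _ = D * L := mul_comm _ _
    calc C + 1 = fC i₁ + 1 := by rw [hC, hCi]
      _ ≤ M := hgoal
  calc (T : ℝ≥0∞) = ENNReal.ofReal (T : ℝ) := by
        rw [ENNReal.ofReal_natCast]
    _ ≤ ENNReal.ofReal ((1 + Real.log R) * (Creal + 1)) := ENNReal.ofReal_le_ofReal hreal
    _ = ENNReal.ofReal (1 + Real.log R) * ENNReal.ofReal (Creal + 1) :=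
        ENNReal.ofReal_mul (by linarith)
    _ ≤ ENNReal.ofReal (1 + Real.log R) * M := mul_le_mul_right hCM1 _
end

section
/- Consider a √LTS run with cost function c^r and rerooting weights (w_t), and suppose node n_T is visited at step T with c^r(n_t) < ∞ for all t ≤ T. Then T ≤ 1 + Σ_{i < T} w_i · max_{i < t ≤ T} c^r(n_t). -/
open scoped ENNReal NNReal Classical

section Aux
variable {N : Type*}

lemma par_iterate_root (t : ParentTree N) (k : ℕ) : t.par^[k] t.root = t.root := by
  induction k with
  | zero => rfl
  | succ k ih => rw [Function.iterate_succ_apply', ih, t.par_root]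

lemma eq_root_of_periodic (t : ParentTree N) (x : N) (k : ℕ) (hk : 1 ≤ k)
    (h : t.par^[k] x = x) : x = t.root := by
  obtain ⟨K, hK⟩ := t.reaches_root x
  have h2 : ∀ m, t.par^[m * k] x = x := by
    intro m
    induction m with
    | zero => simp
    | succ m ih =>
      rw [show (m + 1) * k = k + m * k by ring, Function.iterate_add_apply, ih, h]
  have hKk : K ≤ K * k := by
    have := Nat.mul_le_mul_left K hk; omega
  have h3 : t.par^[K * k] x = t.root := by
    rw [show K * k = (K * k - K) + K by omega, Function.iterate_add_apply, hK,
      par_iterate_root]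
  rw [h2 K] at h3
  exact h3

lemma anc_root (t : ParentTree N) {a : N} (h : t.anc a t.root) : a = t.root := by
  obtain ⟨k, hk⟩ := h
  rw [par_iterate_root] at hk
  exact hk.symm

lemma par_dist (t : ParentTree N) {a n : N} (h : t.anc a n) : t.par^[t.dist a n] n = a :=
  Nat.sInf_mem h

lemma tdist_self (t : ParentTree N) (a : N) : t.dist a a = 0 :=
  Nat.sInf_eq_zero.2 (Or.inl rfl)

lemma dist_step (t : ParentTree N) {a b n : N} (hb : t.par b = a) (hbr : b ≠ t.root)
    (hbn : t.anc b n) : t.dist a n = t.dist b n + 1 := by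
  set e := t.dist b n with he'
  have he : t.par^[e] n = b := par_dist t hbn
  have ha : t.par^[e + 1] n = a := by rw [Function.iterate_succ_apply', he, hb]
  have hanc : t.anc a n := ⟨e + 1, ha⟩
  have hle : t.dist a n ≤ e + 1 := Nat.sInf_le ha
  have hge : e + 1 ≤ t.dist a n := by
    by_contra hlt
    push_neg at hlt
    have hj : t.par^[t.dist a n] n = a := par_dist t hanc
    set j := t.dist a n with hj'
    have hje : j ≤ e := by omega
    have hb2 : t.par^[e - j] a = b := by
      rw [← hj, ← Function.iterate_add_apply, show e - j + j = e by omega]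
      exact he
    have hcyc : t.par^[e - j + 1] a = a := by
      rw [Function.iterate_succ_apply', hb2, hb]
    have haroot : a = t.root := eq_root_of_periodic t a _ (by omega) hcyc
    exact hbr (by rw [← hb2, haroot, par_iterate_root])
  omega

variable {t : ParentTree N}

lemma relProbE_ne_top (P : Policy t) (a n : N) : P.relProbE a n ≠ ⊤ :=
  ENNReal.prod_ne_top fun _ _ => ENNReal.ofReal_ne_top

lemma relProbE_self (P : Policy t) (a : N) : P.relProbE a a = 1 := by
  unfold Policy.relProbE
  rw [tdist_self]
  simp

lemma relProbE_step (P : Policy t) {a b n : N} (hb : t.par b = a) (hbr : b ≠ t.root)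
    (hbn : t.anc b n) :
    P.relProbE a n = P.relProbE b n * ENNReal.ofReal (P.cond b) := by
  unfold Policy.relProbE
  rw [dist_step t hb hbr hbn, Finset.prod_range_succ, par_dist t hbn]

lemma rootSlend_self (P : Policy t) (a : N) : P.rootSlend a a = 1 := by
  unfold Policy.rootSlend
  rw [if_pos ⟨0, rfl⟩, tdist_self]
  simp [relProbE_self]

lemma rootSlend_ge_one (P : Policy t) {a n : N} (h : t.anc a n) : 1 ≤ P.rootSlend a n := by
  unfold Policy.rootSlend
  rw [if_pos h]
  have hmem : t.dist a n ∈ Finset.range (t.dist a n + 1) := Finset.self_mem_range_succ _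
  have h2 := Finset.single_le_sum (f := fun k => (P.relProbE a (t.par^[k] n))⁻¹)
    (fun _ _ => zero_le) hmem
  simpa [par_dist t h, relProbE_self] using h2

lemma rootSlend_step (P : Policy t) {a b n : N} (hb : t.par b = a) (hbr : b ≠ t.root)
    (hpb : 0 < P.cond b) (hbn : t.anc b n) :
    P.rootSlend b n = ENNReal.ofReal (P.cond b) * (P.rootSlend a n - 1) := by
  set pb := ENNReal.ofReal (P.cond b) with hpb'
  have hpb0 : pb ≠ 0 := by
    rw [hpb']; exact (ENNReal.ofReal_pos.2 hpb).ne'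
  have hpbt : pb ≠ ⊤ := ENNReal.ofReal_ne_top
  set e := t.dist b n with he'
  have he : t.par^[e] n = b := par_dist t hbn
  have ha : t.par^[e + 1] n = a := by rw [Function.iterate_succ_apply', he, hb]
  have hanc : t.anc a n := ⟨e + 1, ha⟩
  have key : P.rootSlend a n = 1 + pb⁻¹ * P.rootSlend b n := by
    unfold Policy.rootSlend
    rw [if_pos hanc, if_pos hbn, dist_step t hb hbr hbn, ← he']
    rw [Finset.sum_range_succ, ha, relProbE_self, inv_one]
    have hsum : ∀ k ∈ Finset.range (e + 1),
        (P.relProbE a (t.par^[k] n))⁻¹ = pb⁻¹ * (P.relProbE b (t.par^[k] n))⁻¹ := by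
      intro k hk
      rw [Finset.mem_range] at hk
      have hbk : t.anc b (t.par^[k] n) := by
        refine ⟨e - k, ?_⟩
        rw [← Function.iterate_add_apply, show e - k + k = e by omega]
        exact he
      rw [relProbE_step P hb hbr hbk,
        ENNReal.mul_inv (Or.inr hpbt) (Or.inl (relProbE_ne_top P b _)), mul_comm]
    rw [Finset.sum_congr rfl hsum, ← Finset.mul_sum, add_comm]
  have key2 : P.rootSlend a n - 1 = pb⁻¹ * P.rootSlend b n := by
    rw [key, ENNReal.add_sub_cancel_left ENNReal.one_ne_top]
  rw [key2, ← mul_assoc, ENNReal.mul_inv_cancel hpb0 hpbt, one_mul]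

lemma count_le (P : Policy t) (hpos : ∀ m : N, m ≠ t.root → 0 < P.cond m) :
    ∀ (M : ℕ) (a : N) (S : Finset N), (∀ n ∈ S, t.anc a n ∧ t.dist a n ≤ M) →
      (S.card : ℝ≥0∞) ≤ S.sup (fun n => P.rootSlend a n) := by
  intro M
  induction M with
  | zero =>
    intro a S hS
    have hsub : ∀ n ∈ S, n = a := by
      intro n hn
      obtain ⟨h1, h2⟩ := hS n hn
      have h0 : t.dist a n = 0 := Nat.le_zero.mp h2
      have h3 := par_dist t h1
      rw [h0] at h3
      simpa using h3
    rcases S.eq_empty_or_nonempty with h | ⟨n0, hn0⟩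
    · simp [h]
    · have hS1 : S ⊆ {a} := fun x hx => Finset.mem_singleton.2 (hsub x hx)
      have hcard : S.card ≤ 1 := by
        simpa using Finset.card_le_card hS1
      have ha : a ∈ S := (hsub n0 hn0) ▸ hn0
      calc (S.card : ℝ≥0∞) ≤ 1 := by exact_mod_cast hcard
        _ = P.rootSlend a a := (rootSlend_self P a).symm
        _ ≤ S.sup (fun n => P.rootSlend a n) := Finset.le_sup ha
  | succ M ih =>
    intro a S hS
    classical
    set S' := S.erase a with hS'
    set f : N → N := fun n => t.par^[t.dist a n - 1] n with hf
    have hmem : ∀ n ∈ S', t.par (f n) = a ∧ f n ≠ t.root ∧ t.anc (f n) n ∧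
        t.dist (f n) n ≤ M := by
      intro n hn
      have hna : n ≠ a := (Finset.mem_erase.1 hn).1
      have hnS : n ∈ S := (Finset.mem_erase.1 hn).2
      obtain ⟨h1, h2⟩ := hS n hnS
      have hd : t.par^[t.dist a n] n = a := par_dist t h1
      have hd1 : 1 ≤ t.dist a n := by
        rcases Nat.eq_zero_or_pos (t.dist a n) with h0 | h0
        · rw [h0] at hd; exact absurd hd hna
        · exact h0
      have hfn : f n = t.par^[t.dist a n - 1] n := rfl
      have hpar : t.par (f n) = a := by
        rw [hfn, ← Function.iterate_succ_apply' t.par (t.dist a n - 1) n,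
          show (t.dist a n - 1).succ = t.dist a n from by omega]
        exact hd
      have hfnr : f n ≠ t.root := by
        intro hfr
        have haroot : a = t.root := by rw [← hpar, hfr, t.par_root]
        have h' : t.par^[t.dist a n - 1] n = a := by
          rw [← hfn, hfr]; exact haroot.symm
        have hle : t.dist a n ≤ t.dist a n - 1 := Nat.sInf_le h'
        omega
      have hanc : t.anc (f n) n := ⟨t.dist a n - 1, rfl⟩
      have hdist : t.dist (f n) n ≤ M := by
        have := dist_step t hpar hfnr hanc
        omega
      exact ⟨hpar, hfnr, hanc, hdist⟩
    set C := S'.image f with hC'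
    have hC : ↑C ⊆ t.children a := by
      intro b hb
      rw [hC'] at hb
      simp only [Finset.coe_image, Set.mem_image, Finset.mem_coe] at hb
      obtain ⟨n, hn, rfl⟩ := hb
      obtain ⟨h1, h2, _, _⟩ := hmem n hn
      exact ⟨h2, h1⟩
    have card1 : S'.card = ∑ b ∈ C, (S'.filter (fun n => f n = b)).card :=
      Finset.card_eq_sum_card_fiberwise fun n hn => Finset.mem_image_of_mem f hn
    set X := S'.sup (fun n => P.rootSlend a n) - 1 with hX
    have fiber : ∀ b ∈ C, ((S'.filter (fun n => f n = b)).card : ℝ≥0∞) ≤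
        ENNReal.ofReal (P.cond b) * X := by
      intro b hb
      rw [hC'] at hb
      obtain ⟨n0, hn0, hfn0⟩ := Finset.mem_image.1 hb
      obtain ⟨hpar0, hbr0, _, _⟩ := hmem n0 hn0
      rw [hfn0] at hpar0 hbr0
      have hIH := ih b (S'.filter (fun n => f n = b)) (by
        intro n hn
        rw [Finset.mem_filter] at hn
        obtain ⟨hnS', hfn⟩ := hn
        obtain ⟨_, _, hanc, hdist⟩ := hmem n hnS'
        rw [hfn] at hanc hdist
        exact ⟨hanc, hdist⟩)
      refine hIH.trans (Finset.sup_le ?_)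
      intro n hn
      rw [Finset.mem_filter] at hn
      obtain ⟨hnS', hfn⟩ := hn
      obtain ⟨_, _, hanc, _⟩ := hmem n hnS'
      rw [hfn] at hanc
      rw [rootSlend_step P hpar0 hbr0 (hpos b hbr0) hanc]
      exact mul_le_mul_right (tsub_le_tsub_right (Finset.le_sup hnS') 1) _
    have sum_pb : ∑ b ∈ C, ENNReal.ofReal (P.cond b) ≤ 1 := by
      rw [← ENNReal.ofReal_sum_of_nonneg fun b _ => P.cond_nonneg b]
      calc ENNReal.ofReal (∑ b ∈ C, P.cond b) ≤ ENNReal.ofReal 1 :=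
            ENNReal.ofReal_le_ofReal (P.sum_le_one a C hC)
        _ = 1 := ENNReal.ofReal_one
    have h1 : (S'.card : ℝ≥0∞) ≤ X := by
      rw [card1, Nat.cast_sum]
      calc ∑ b ∈ C, ((S'.filter (fun n => f n = b)).card : ℝ≥0∞)
          ≤ ∑ b ∈ C, ENNReal.ofReal (P.cond b) * X := Finset.sum_le_sum fiber
        _ = (∑ b ∈ C, ENNReal.ofReal (P.cond b)) * X := by rw [Finset.sum_mul]
        _ ≤ 1 * X := mul_le_mul_left sum_pb X
        _ = X := one_mul X
    rcases S.eq_empty_or_nonempty with h | ⟨n0, hn0⟩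
    · simp [h]
    · have hsup1 : 1 ≤ S.sup (fun n => P.rootSlend a n) :=
        le_trans (rootSlend_ge_one P (hS n0 hn0).1) (Finset.le_sup hn0)
      have hcard : S.card ≤ S'.card + 1 := by
        have hsub : S ⊆ insert a S' := by
          intro x hx
          rcases eq_or_ne x a with rfl | hxa
          · exact Finset.mem_insert_self _ _
          · exact Finset.mem_insert_of_mem (Finset.mem_erase.2 ⟨hxa, hx⟩)
        calc S.card ≤ (insert a S').card := Finset.card_le_card hsub
          _ ≤ S'.card + 1 := Finset.card_insert_le _ _
      calc (S.card : ℝ≥0∞) ≤ (S'.card : ℝ≥0∞) + 1 := by exact_mod_cast hcard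
        _ ≤ X + 1 := add_le_add_left h1 1
        _ ≤ (S.sup (fun n => P.rootSlend a n) - 1) + 1 := by
            refine add_le_add_left (tsub_le_tsub_right ?_ 1) 1
            exact Finset.sup_mono (Finset.erase_subset _ _)
        _ = S.sup (fun n => P.rootSlend a n) := tsub_add_cancel_of_le hsup1

end Aux

/-- `c^r` composition bound: if `n_T` is visited at step `T` of a √LTS run
and `c^r(n_t) < ∞` for all `t ≤ T`, then
`T ≤ 1 + Σ_{i<T} w_i · max_{i<t≤T} c^r(n_t)`. -/
theorem stmt14 {N : Type*} (t : ParentTree N) (hfin : ∀ n : N, (t.children n).Finite)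
    (P : Policy t) (hpos : ∀ m : N, m ≠ t.root → 0 < P.cond m)
    (visit : ℕ → N) (Q : ℕ → Set N) (w : ℕ → ℝ≥0)
    (hrun : IsRootLTS t P visit Q w)
    (T : ℕ) (hT : 1 ≤ T) (hQT : (Q T).Nonempty)
    (hfinite : ∀ s : ℕ, 1 ≤ s → s ≤ T → runCost t P visit Q w (visit s) ≠ ⊤) :
    (T : ℝ≥0∞) ≤ 1 + ∑ i ∈ Finset.Ico 1 T, (w i : ℝ≥0∞) *
      (Finset.Ioc i T).sup (fun s => runCost t P visit Q w (visit s)) := by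
  classical
  obtain ⟨hQ1, hstep, hempty, hinj⟩ := hrun
  set c := runCost t P visit Q w with hc
  -- Q s nonempty for all 1 ≤ s ≤ T
  have hQne : ∀ s, 1 ≤ s → s ≤ T → (Q s).Nonempty := by
    intro s hs1 hsT
    by_contra hemp
    rw [Set.not_nonempty_iff_eq_empty] at hemp
    have hall : ∀ k, Q (s + k) = ∅ := by
      intro k
      induction k with
      | zero => exact hemp
      | succ k ih => exact hempty (s + k) (by omega) ih
    have h2 := hall (T - s)
    rw [show s + (T - s) = T by omega] at h2
    exact hQT.ne_empty h2
  have hv1 : visit 1 = t.root := by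
    have h := (hstep 1 le_rfl (by rw [hQ1]; exact Set.singleton_nonempty _)).1
    rw [hQ1] at h
    exact h
  -- every strict ancestor of a queued node was visited earlier
  have hanc_vis : ∀ s, 1 ≤ s → ∀ n ∈ Q s, ∀ a, t.sanc a n →
      ∃ j, 1 ≤ j ∧ j < s ∧ (Q j).Nonempty ∧ visit j = a := by
    intro s hs
    induction s, hs using Nat.le_induction with
    | base =>
      intro n hn a ha
      rw [hQ1, Set.mem_singleton_iff] at hn
      subst hn
      exact absurd (anc_root t ha.1) ha.2
    | succ s hs ih =>
      intro n hn a ha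
      by_cases hQs : (Q s).Nonempty
      · rw [(hstep s hs hQs).2.2] at hn
        rcases hn with hn | hn
        · obtain ⟨j, hj1, hj2, hj3, hj4⟩ := ih n hn.1 a ha
          exact ⟨j, hj1, by omega, hj3, hj4⟩
        · obtain ⟨hnr, hpar⟩ := hn
          obtain ⟨⟨k, hk⟩, hane⟩ := ha
          match k, hk with
          | 0, hk => simp at hk; exact absurd hk.symm hane
          | k + 1, hk =>
            rw [Function.iterate_succ_apply, hpar] at hk
            by_cases hav : a = visit s
            · exact ⟨s, hs, by omega, hQs, hav.symm⟩
            · obtain ⟨j, hj1, hj2, hj3, hj4⟩ :=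
                ih (visit s) (hstep s hs hQs).1 a ⟨⟨k, hk⟩, hav⟩
              exact ⟨j, hj1, by omega, hj3, hj4⟩
      · rw [Set.not_nonempty_iff_eq_empty] at hQs
        rw [hempty s hs hQs] at hn
        exact absurd hn (Set.notMem_empty n)
  have hvinj : ∀ s s', 1 ≤ s → s ≤ T → 1 ≤ s' → s' ≤ T → visit s = visit s' → s = s' :=
    fun s s' h1 h2 h3 h4 h5 => hinj s s' h1 h3 (hQne s h1 h2) (hQne s' h3 h4) h5
  have hvnr : ∀ s, 1 < s → s ≤ T → visit s ≠ t.root := by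
    intro s h1 h2 hr
    have := hvinj s 1 (by omega) h2 le_rfl hT (by rw [hr, hv1])
    omega
  set M : ℕ → ℝ≥0∞ := fun i => (Finset.Ioc i T).sup (fun r => c (visit r)) with hM
  have hMne : ∀ i, M i ≠ ⊤ := by
    intro i
    have : M i < ⊤ := by
      rw [hM]
      refine (Finset.sup_lt_iff (by simp)).2 fun r hr => ?_
      rw [Finset.mem_Ioc] at hr
      exact lt_top_iff_ne_top.2 (hfinite r (by omega) hr.2)
    exact this.ne
  -- key: choice of an earlier rerooting step with small slenderness
  have key : ∀ s, 1 < s → s ≤ T → ∃ i, 1 ≤ i ∧ i < s ∧ t.sanc (visit i) (visit s) ∧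
      P.rootSlend (visit i) (visit s) ≤ 1 + (w i : ℝ≥0∞) * M i := by
    intro s hs1 hsT
    have hQs := hQne s (by omega) hsT
    have hcs : c (visit s) ≠ ⊤ := hfinite s (by omega) hsT
    have hcs_eq : c (visit s) =
        ⨅ i ∈ {i : ℕ | 1 ≤ i ∧ (Q i).Nonempty ∧ t.sanc (visit i) (visit s)},
          (P.rootSlend (visit i) (visit s) - 1) / (w i : ℝ≥0∞) := by
      rw [hc]
      unfold runCost
      rw [if_neg (hvnr s hs1 hsT)]
    have hlt : ∀ i, 1 ≤ i → (Q i).Nonempty → t.sanc (visit i) (visit s) → i < s := by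
      intro i hi hQi hsanc
      have hvs : visit s ∈ Q s := (hstep s (by omega) hQs).1
      obtain ⟨j, hj1, hjs, hQj, hvj⟩ := hanc_vis s (by omega) (visit s) hvs (visit i) hsanc
      have := hinj i j hi hj1 hQi hQj hvj.symm
      omega
    set F := (Finset.range s).filter
      (fun i => 1 ≤ i ∧ (Q i).Nonempty ∧ t.sanc (visit i) (visit s)) with hF
    have hFne : F.Nonempty := by
      by_contra hFe
      rw [Finset.not_nonempty_iff_eq_empty] at hFe
      apply hcs
      rw [hcs_eq]
      have hset : {i : ℕ | 1 ≤ i ∧ (Q i).Nonempty ∧ t.sanc (visit i) (visit s)} = ∅ := by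
        ext i
        simp only [Set.mem_setOf_eq, Set.mem_empty_iff_false, iff_false, not_and]
        intro hi hQi hsanc
        have hmemF : i ∈ F := Finset.mem_filter.2
          ⟨Finset.mem_range.2 (hlt i hi hQi hsanc), hi, hQi, hsanc⟩
        rw [hFe] at hmemF
        exact absurd hmemF (Finset.notMem_empty i)
      rw [hset]
      simp
    obtain ⟨i, hiF, hmin⟩ := Finset.exists_min_image F
      (fun i => (P.rootSlend (visit i) (visit s) - 1) / (w i : ℝ≥0∞)) hFne
    rw [hF, Finset.mem_filter, Finset.mem_range] at hiF
    obtain ⟨his, hi1, hQi, hsanc⟩ := hiF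
    have hile : (P.rootSlend (visit i) (visit s) - 1) / (w i : ℝ≥0∞) ≤ c (visit s) := by
      rw [hcs_eq]
      refine le_iInf₂ fun j hj => ?_
      obtain ⟨hj1, hQj, hsj⟩ := hj
      exact hmin j (Finset.mem_filter.2
        ⟨Finset.mem_range.2 (hlt j hj1 hQj hsj), hj1, hQj, hsj⟩)
    have hcM : c (visit s) ≤ M i := by
      rw [hM]
      exact Finset.le_sup (f := fun r => c (visit r)) (Finset.mem_Ioc.2 ⟨his, hsT⟩)
    have hdiv : (P.rootSlend (visit i) (visit s) - 1) / (w i : ℝ≥0∞) ≤ M i :=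
      hile.trans hcM
    have hΛ : P.rootSlend (visit i) (visit s) - 1 ≤ (w i : ℝ≥0∞) * M i := by
      by_cases hw : (w i : ℝ≥0∞) = 0
      · rw [hw, zero_mul]
        by_contra hne
        have hne0 : P.rootSlend (visit i) (visit s) - 1 ≠ 0 := by
          intro h0
          exact hne (h0 ▸ le_rfl)
        rw [hw, ENNReal.div_zero hne0] at hdiv
        exact hMne i (top_le_iff.1 hdiv)
      · rw [ENNReal.div_le_iff hw ENNReal.coe_ne_top] at hdiv
        rw [mul_comm]
        exact hdiv
    refine ⟨i, hi1, his, hsanc, ?_⟩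
    calc P.rootSlend (visit i) (visit s)
        ≤ (P.rootSlend (visit i) (visit s) - 1) + 1 := le_tsub_add
      _ ≤ (w i : ℝ≥0∞) * M i + 1 := add_le_add_left hΛ 1
      _ = 1 + (w i : ℝ≥0∞) * M i := add_comm _ _
  choose g hg1 hg2 hg3 hg4 using key
  set g' : ℕ → ℕ := fun s => if h : 1 < s ∧ s ≤ T then g s h.1 h.2 else 1 with hg'
  have hg'mem : ∀ s ∈ Finset.Ioc 1 T, g' s ∈ Finset.Ico 1 T := by
    intro s hs
    rw [Finset.mem_Ioc] at hs
    rw [hg']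
    simp only [dif_pos hs]
    rw [Finset.mem_Ico]
    have h1 := hg1 s hs.1 hs.2
    have h2 := hg2 s hs.1 hs.2
    omega
  have hcard : (Finset.Ioc 1 T).card =
      ∑ i ∈ Finset.Ico 1 T, ((Finset.Ioc 1 T).filter (fun s => g' s = i)).card :=
    Finset.card_eq_sum_card_fiberwise hg'mem
  have hfiber : ∀ i ∈ Finset.Ico 1 T,
      (((Finset.Ioc 1 T).filter (fun s => g' s = i)).card : ℝ≥0∞) ≤ (w i : ℝ≥0∞) * M i := by
    intro i hi
    rw [Finset.mem_Ico] at hi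
    set F := (Finset.Ioc 1 T).filter (fun s => g' s = i) with hF
    have hprop : ∀ s ∈ F, 1 < s ∧ s ≤ T ∧ t.sanc (visit i) (visit s) ∧
        P.rootSlend (visit i) (visit s) ≤ 1 + (w i : ℝ≥0∞) * M i := by
      intro s hsF
      rw [hF, Finset.mem_filter, Finset.mem_Ioc] at hsF
      obtain ⟨⟨hs1, hsT⟩, hgs⟩ := hsF
      rw [hg'] at hgs
      simp only [dif_pos (⟨hs1, hsT⟩ : 1 < s ∧ s ≤ T)] at hgs
      subst hgs
      exact ⟨hs1, hsT, hg3 s hs1 hsT, hg4 s hs1 hsT⟩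
    set Si := F.image visit with hSi
    have hinjF : Set.InjOn visit ↑F := by
      intro x hx y hy hxy
      have hxp := hprop x hx
      have hyp := hprop y hy
      exact hvinj x y (by omega) hxp.2.1 (by omega) hyp.2.1 hxy
    have hcardSi : Si.card = F.card := Finset.card_image_of_injOn hinjF
    have hanotin : visit i ∉ Si := by
      intro hmem
      obtain ⟨s, hsF, hvs⟩ := Finset.mem_image.1 hmem
      have hp := hprop s hsF
      exact hp.2.2.1.2 hvs.symm
    have hancs : ∀ n ∈ insert (visit i) Si, t.anc (visit i) n ∧
        t.dist (visit i) n ≤ (insert (visit i) Si).sup (fun n => t.dist (visit i) n) := by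
      intro n hn
      refine ⟨?_, Finset.le_sup hn⟩
      rcases Finset.mem_insert.1 hn with rfl | hn'
      · exact ⟨0, rfl⟩
      · obtain ⟨s, hsF, rfl⟩ := Finset.mem_image.1 hn'
        exact (hprop s hsF).2.2.1.1
    have hK := count_le P hpos ((insert (visit i) Si).sup (fun n => t.dist (visit i) n))
      (visit i) (insert (visit i) Si) hancs
    have hsup : (insert (visit i) Si).sup (fun n => P.rootSlend (visit i) n) ≤
        1 + (w i : ℝ≥0∞) * M i := by
      rw [Finset.sup_insert]
      refine sup_le ?_ (Finset.sup_le ?_)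
      · rw [rootSlend_self]
        exact le_self_add
      · intro n hn
        obtain ⟨s, hsF, rfl⟩ := Finset.mem_image.1 hn
        exact (hprop s hsF).2.2.2
    have hScard : ((insert (visit i) Si).card : ℝ≥0∞) = (Si.card : ℝ≥0∞) + 1 := by
      rw [Finset.card_insert_of_notMem hanotin]
      push_cast
      ring
    have hfinal : (1 : ℝ≥0∞) + (Si.card : ℝ≥0∞) ≤ 1 + (w i : ℝ≥0∞) * M i := by
      rw [add_comm]
      calc (Si.card : ℝ≥0∞) + 1 = ((insert (visit i) Si).card : ℝ≥0∞) := hScard.symm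
        _ ≤ (insert (visit i) Si).sup (fun n => P.rootSlend (visit i) n) := hK
        _ ≤ 1 + (w i : ℝ≥0∞) * M i := hsup
    have := (ENNReal.add_le_add_iff_left ENNReal.one_ne_top).1 hfinal
    rw [← hcardSi]
    exact this
  have hTcast : (T : ℝ≥0∞) = 1 + ((Finset.Ioc 1 T).card : ℝ≥0∞) := by
    rw [Nat.card_Ioc]
    have h1 : T = 1 + (T - 1) := by omega
    calc (T : ℝ≥0∞) = ((1 + (T - 1) : ℕ) : ℝ≥0∞) := by rw [← h1]
      _ = 1 + ((T - 1 : ℕ) : ℝ≥0∞) := by push_cast; ring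
  rw [hTcast]
  refine add_le_add_right ?_ 1
  calc ((Finset.Ioc 1 T).card : ℝ≥0∞)
      = ∑ i ∈ Finset.Ico 1 T, (((Finset.Ioc 1 T).filter (fun s => g' s = i)).card : ℝ≥0∞) := by
        rw [hcard]; push_cast; rfl
    _ ≤ ∑ i ∈ Finset.Ico 1 T, (w i : ℝ≥0∞) * M i := Finset.sum_le_sum hfiber
end
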